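/- Let (A, q) be a metric group of exponent n. Then A is generated by its isotropic elements if and only if (i) q^n = 1 (i.e., q(x)^n = 1 for all x), and (ii) (A, q) contains a metric subgroup isomorphic to the hyperbolic metric group (Z/nZ × Z/nZ, h) where h(x,y) = ζ^{xy} for a primitive n-th root of unity ζ. -/

import Mathlib

/-- The bilinear form associated to a quadratic form `q : A → kˣ`. -/
def Bform {A k : Type*} [AddCommGroup A] [Field k] (q : A → kˣ) (x y : A) : kˣ :=
  q (x + y) * (q x * q y)⁻¹

/-- `q : A → kˣ` is a quadratic form: `q(-x) = q(x)` and its associated form is bilinear. -/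
def IsQuadraticForm {A k : Type*} [AddCommGroup A] [Field k] (q : A → kˣ) : Prop :=
  (∀ x, q (-x) = q x) ∧ ∀ x y z, Bform q (x + y) z = Bform q x z * Bform q y z

/-- Non-degeneracy of the bilinear form associated to `q`. -/
def Nondeg {A k : Type*} [AddCommGroup A] [Field k] (q : A → kˣ) : Prop :=
  ∀ x, (∀ y, Bform q x y = 1) → x = 0

namespace MG

variable {A k : Type*} [AddCommGroup A] [Field k] {q : A → kˣ}

theorem bform_comm (q : A → kˣ) (x y : A) : Bform q x y = Bform q y x := by
  unfold Bform; rw [add_comm, mul_comm (q x)]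

theorem bform_add_right (hq : IsQuadraticForm q) (x y z : A) :
    Bform q x (y + z) = Bform q x y * Bform q x z := by
  rw [bform_comm, hq.2, bform_comm q y, bform_comm q z]

theorem bform_zero_left (hq : IsQuadraticForm q) (y : A) : Bform q 0 y = 1 := by
  have h := hq.2 0 0 y
  rw [add_zero] at h
  exact (mul_eq_left.mp h.symm)

theorem bform_zero_right (hq : IsQuadraticForm q) (x : A) : Bform q x 0 = 1 := by
  rw [bform_comm]; exact bform_zero_left hq x

theorem q_zero (hq : IsQuadraticForm q) : q 0 = 1 := by
  have h := bform_zero_left hq 0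
  unfold Bform at h
  rw [add_zero, mul_inv, ← mul_assoc, mul_inv_cancel, one_mul, inv_eq_one] at h
  exact h

theorem q_add (hq : IsQuadraticForm q) (x y : A) :
    q (x + y) = q x * q y * Bform q x y := by
  unfold Bform
  rw [mul_comm (q (x + y)), ← mul_assoc, mul_inv_cancel, one_mul]

theorem bform_neg_right (hq : IsQuadraticForm q) (x y : A) :
    Bform q x (-y) = (Bform q x y)⁻¹ := by
  have h : Bform q x (y + -y) = Bform q x y * Bform q x (-y) := bform_add_right hq x y (-y)
  rw [add_neg_cancel, bform_zero_right hq] at h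
  rw [eq_inv_iff_mul_eq_one, mul_comm, ← h]

theorem bform_neg_left (hq : IsQuadraticForm q) (x y : A) :
    Bform q (-x) y = (Bform q x y)⁻¹ := by
  rw [bform_comm, bform_neg_right hq, bform_comm]

theorem bform_self (hq : IsQuadraticForm q) (x : A) : Bform q x x = q x ^ 2 := by
  have h := q_add hq x (-x)
  rw [add_neg_cancel, q_zero hq, hq.1, bform_neg_right hq, eq_comm,
    mul_inv_eq_one, eq_comm] at h
  rw [sq]
  exact h

theorem bform_nsmul_left (hq : IsQuadraticForm q) (m : ℕ) (x y : A) :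
    Bform q (m • x) y = Bform q x y ^ m := by
  induction m with
  | zero => simpa using bform_zero_left hq y
  | succ m ih => rw [succ_nsmul, hq.2, ih, pow_succ]

theorem bform_nsmul_right (hq : IsQuadraticForm q) (m : ℕ) (x y : A) :
    Bform q x (m • y) = Bform q x y ^ m := by
  rw [bform_comm, bform_nsmul_left hq, bform_comm]

theorem bform_nsmul_nsmul (hq : IsQuadraticForm q) (a b : ℕ) (x y : A) :
    Bform q (a • x) (b • y) = Bform q x y ^ (a * b) := by
  rw [bform_nsmul_left hq, bform_nsmul_right hq, ← pow_mul, mul_comm b a]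

theorem q_nsmul (hq : IsQuadraticForm q) (m : ℕ) (x : A) :
    q (m • x) = q x ^ (m * m) := by
  induction m with
  | zero => simpa using q_zero hq
  | succ m ih =>
    rw [succ_nsmul, q_add hq, ih, bform_nsmul_left hq, bform_self hq]
    rw [← pow_mul]
    nth_rewrite 2 [← pow_one (q x)]
    rw [← pow_add, ← pow_add]
    ring_nf

end MG

namespace MG

variable {A k : Type*} [AddCommGroup A] [Field k] {q : A → kˣ}

theorem merge [Finite A] (hq : IsQuadraticForm q) {x y : A} (hx : q x = 1) (hy : q y = 1) :
    ∃ z : A, q z = 1 ∧ Nat.lcm (addOrderOf x) (addOrderOf y) ∣ addOrderOf z := by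
  set a := addOrderOf x with ha
  set b := addOrderOf y with hb
  have ha0 : a ≠ 0 := (addOrderOf_pos x).ne'
  have hb0 : b ≠ 0 := (addOrderOf_pos y).ne'
  set a' := a.factorizationLCMLeft b with ha'd
  set b' := a.factorizationLCMRight b with hb'd
  have ha' : a' ∣ a := Nat.factorizationLCMLeft_dvd_left a b
  have hb' : b' ∣ b := Nat.factorizationLCMRight_dvd_right a b
  have hco : a'.Coprime b' := Nat.coprime_factorizationLCMLeft_factorizationLCMRight a b
  have hmul : a' * b' = Nat.lcm a b := Nat.factorizationLCMLeft_mul_factorizationLCMRight ha0 hb0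
  set x' := (a / a') • x with hx'
  set y' := (b / b') • y with hy'
  have hox : addOrderOf x' = a' := addOrderOf_nsmul_addOrderOf_sub ha0 ha'
  have hoy : addOrderOf y' = b' := addOrderOf_nsmul_addOrderOf_sub hb0 hb'
  have hqx' : q x' = 1 := by rw [hx', q_nsmul hq, hx, one_pow]
  have hqy' : q y' = 1 := by rw [hy', q_nsmul hq, hy, one_pow]
  refine ⟨x' + y', ?_, ?_⟩
  · have h1 : Bform q x' y' ^ a' = 1 := by
      rw [← bform_nsmul_left hq, ← hox, addOrderOf_nsmul_eq_zero, bform_zero_left hq]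
    have h2 : Bform q x' y' ^ b' = 1 := by
      rw [← bform_nsmul_right hq, ← hoy, addOrderOf_nsmul_eq_zero, bform_zero_right hq]
    have hd : orderOf (Bform q x' y') ∣ Nat.gcd a' b' :=
      Nat.dvd_gcd (orderOf_dvd_of_pow_eq_one h1) (orderOf_dvd_of_pow_eq_one h2)
    rw [hco] at hd
    have hB : Bform q x' y' = 1 := orderOf_eq_one_iff.mp (Nat.dvd_one.mp hd)
    rw [q_add hq, hqx', hqy', hB, one_mul, one_mul]
  · have heq : addOrderOf (x' + y') = a' * b' := by
      rw [(AddCommute.all x' y').addOrderOf_add_eq_mul_addOrderOf_of_coprime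
        (by rw [hox, hoy]; exact hco), hox, hoy]
    rw [heq, ← hmul]

theorem finset_lcm [Finite A] (hq : IsQuadraticForm q) (s : Finset A)
    (hs : ∀ a ∈ s, q a = 1) :
    ∃ z : A, q z = 1 ∧ s.lcm addOrderOf ∣ addOrderOf z := by
  classical
  induction s using Finset.induction_on with
  | empty => exact ⟨0, q_zero hq, by simp⟩
  | @insert a s ha ih =>
    obtain ⟨z₀, hz₀, hdvd⟩ := ih (fun b hb => hs b (Finset.mem_insert_of_mem hb))
    obtain ⟨z, hz, hdvd2⟩ := merge hq (hs a (Finset.mem_insert_self a s)) hz₀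
    refine ⟨z, hz, ?_⟩
    rw [Finset.lcm_insert, lcm_eq_nat_lcm]
    exact Nat.lcm_dvd ((Nat.dvd_lcm_left _ _).trans hdvd2)
      (hdvd.trans ((Nat.dvd_lcm_right _ _).trans hdvd2))

theorem qn_one [Finite A] (hq : IsQuadraticForm q)
    (hgen : AddSubgroup.closure {x : A | q x = 1} = ⊤) (x : A) :
    q x ^ (AddMonoid.exponent A) = 1 := by
  set n := AddMonoid.exponent A with hnn
  have hB : ∀ u v : A, Bform q u v ^ n = 1 := fun u v => by
    rw [← bform_nsmul_left hq, hnn, AddMonoid.exponent_nsmul_eq_zero, bform_zero_left hq]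
  have hx : x ∈ AddSubgroup.closure {x : A | q x = 1} := by rw [hgen]; trivial
  refine AddSubgroup.closure_induction (p := fun g _ => q g ^ n = 1) ?_ ?_ ?_ ?_ hx
  · intro g hg; rw [Set.mem_setOf_eq.mp hg, one_pow]
  · show q (0:A) ^ n = 1
    rw [q_zero hq, one_pow]
  · intro u v _ _ h1 h2
    rw [q_add hq, mul_pow, mul_pow, h1, h2, hB, one_mul, one_mul]
  · intro u _ h1; rw [hq.1]; exact h1

theorem exists_isotropic_orderOf [Finite A] (hq : IsQuadraticForm q)
    (hgen : AddSubgroup.closure {x : A | q x = 1} = ⊤) :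
    ∃ x : A, q x = 1 ∧ addOrderOf x = AddMonoid.exponent A := by
  classical
  have hfin : ({x : A | q x = 1}).Finite := Set.toFinite _
  set s := hfin.toFinset with hsdef
  set d := s.lcm addOrderOf with hd
  have hdvd : ∀ g : A, g ∈ AddSubgroup.closure {x : A | q x = 1} → addOrderOf g ∣ d := by
    intro g hg
    refine AddSubgroup.closure_induction (p := fun g _ => addOrderOf g ∣ d) ?_ ?_ ?_ ?_ hg
    · intro u hu; exact Finset.dvd_lcm (hfin.mem_toFinset.mpr hu)
    · show addOrderOf (0:A) ∣ d
      rw [addOrderOf_zero]; exact one_dvd d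
    · intro u v _ _ h1 h2
      exact ((AddCommute.all u v).addOrderOf_add_dvd_lcm).trans (Nat.lcm_dvd h1 h2)
    · intro u _ h1; rwa [addOrderOf_neg]
  obtain ⟨g, hg⟩ := AddMonoid.exists_addOrderOf_eq_exponent
    (AddMonoid.ExponentExists.of_finite (G := A))
  have h1 : AddMonoid.exponent A ∣ d := hg ▸ hdvd g (by rw [hgen]; trivial)
  obtain ⟨z, hz, h2⟩ := finset_lcm hq s (fun a ha => hfin.mem_toFinset.mp ha)
  exact ⟨z, hz, Nat.dvd_antisymm
    (addOrderOf_dvd_of_nsmul_eq_zero (AddMonoid.exponent_nsmul_eq_zero z))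
    (h1.trans h2)⟩

end MG

open MG in
theorem exists_primitive {A k : Type*} [AddCommGroup A] [Field k] {q : A → kˣ}
    [Finite A] (hq : IsQuadraticForm q) (hnd : Nondeg q)
    {x : A} (hx : addOrderOf x = AddMonoid.exponent A) :
    ∃ y : A, IsPrimitiveRoot (Bform q x y) (AddMonoid.exponent A) := by
  set n := AddMonoid.exponent A with hnn
  let f : Multiplicative A →* kˣ :=
    { toFun := fun a => Bform q x a.toAdd
      map_one' := bform_zero_right hq x
      map_mul' := fun a b => bform_add_right hq x _ _ }
  let T : Subgroup kˣ := f.range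
  haveI : Finite T := Set.Finite.to_subtype (Set.finite_range f)
  obtain ⟨c0, hc0⟩ := IsCyclic.exists_generator (α := T)
  obtain ⟨a0, ha0⟩ := MonoidHom.mem_range.mp c0.2
  have hcB : Bform q x a0.toAdd = (c0 : kˣ) := ha0
  have hdvd1 : orderOf (c0 : kˣ) ∣ n := by
    apply orderOf_dvd_of_pow_eq_one
    rw [← hcB, ← bform_nsmul_right hq, hnn, AddMonoid.exponent_nsmul_eq_zero,
      bform_zero_right hq]
  have hdvd2 : n ∣ orderOf (c0 : kˣ) := by
    set m := orderOf (c0 : kˣ) with hm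
    have hc0m : c0 ^ m = 1 := by
      have : orderOf c0 = m := (orderOf_injective T.subtype Subtype.coe_injective c0).symm
      rw [← this]; exact pow_orderOf_eq_one c0
    have hall : ∀ u : T, u ^ m = 1 := by
      intro u
      obtain ⟨j, rfl⟩ := hc0 u
      rw [← zpow_natCast, ← zpow_mul, mul_comm, zpow_mul, zpow_natCast, hc0m, one_zpow]
    have hz : ∀ z : A, Bform q x z ^ m = 1 := by
      intro z
      have hu : f (Multiplicative.ofAdd z) ∈ f.range := ⟨_, rfl⟩
      have := hall ⟨f (Multiplicative.ofAdd z), hu⟩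
      have h2 := congrArg (Subtype.val) this
      push_cast at h2
      exact h2
    have hmx : m • x = 0 := by
      apply hnd
      intro z
      rw [bform_nsmul_left hq]
      exact hz z
    rw [← hx]
    exact addOrderOf_dvd_of_nsmul_eq_zero hmx
  have hord : orderOf (c0 : kˣ) = n := Nat.dvd_antisymm hdvd1 hdvd2
  refine ⟨a0.toAdd, ?_⟩
  rw [hcB]
  exact ⟨by rw [← hord]; exact pow_orderOf_eq_one _,
    fun l hl => hord ▸ orderOf_dvd_of_pow_eq_one hl⟩

def liftHom {A : Type*} [AddCommGroup A] (n : ℕ) (g : A) (hg : n • g = 0) : ZMod n →+ A :=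
  ZMod.lift n ⟨zmultiplesHom A g, by rw [zmultiplesHom_apply, natCast_zsmul]; exact hg⟩

theorem liftHom_apply {A : Type*} [AddCommGroup A] {n : ℕ} [NeZero n] (g : A)
    (hg : n • g = 0) (j : ZMod n) : liftHom n g hg j = j.val • g := by
  have h1 : ((j.val : ℤ) : ZMod n) = j := by
    rw [Int.cast_natCast, ZMod.natCast_zmod_val]
  calc liftHom n g hg j = liftHom n g hg ((j.val : ℤ) : ZMod n) := by rw [h1]
    _ = (j.val : ℤ) • g := ZMod.lift_coe n _ _
    _ = j.val • g := natCast_zsmul g j.val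

theorem units_eq_pow_of_pow_eq_one {k : Type*} [Field k] {n : ℕ} [NeZero n] {ζ ξ : kˣ}
    (h : IsPrimitiveRoot ζ n) (hξ : ξ ^ n = 1) : ∃ i < n, ζ ^ i = ξ := by
  have h' : IsPrimitiveRoot (ζ : k) n := IsPrimitiveRoot.coe_units_iff.mpr h
  have hξ' : (ξ : k) ^ n = 1 := by rw [← Units.val_pow_eq_pow_val, hξ, Units.val_one]
  obtain ⟨i, hi, he⟩ := h'.eq_pow_of_pow_eq_one hξ'
  exact ⟨i, hi, Units.ext (by push_cast; exact he)⟩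

open MG in
theorem forward_hyp {A k : Type*} [AddCommGroup A] [Field k] {q : A → kˣ}
    [Finite A] (hq : IsQuadraticForm q) (hnd : Nondeg q)
    (hgen : AddSubgroup.closure {x : A | q x = 1} = ⊤) :
    ∃ ζ : kˣ, IsPrimitiveRoot ζ (AddMonoid.exponent A) ∧
      ∃ φ : ZMod (AddMonoid.exponent A) × ZMod (AddMonoid.exponent A) →+ A,
        Function.Injective φ ∧
        ∀ v, q (φ v) = ζ ^ (v.1.val * v.2.val) := by
  set n := AddMonoid.exponent A with hnn
  haveI : NeZero n := ⟨AddMonoid.exponent_ne_zero_of_finite⟩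
  obtain ⟨x, hx1, hxo⟩ := exists_isotropic_orderOf hq hgen
  obtain ⟨y0, hprim⟩ := exists_primitive hq hnd hxo
  set ζ := Bform q x y0 with hζdef
  have hy0n : q y0 ^ n = 1 := qn_one hq hgen y0
  obtain ⟨i, hi_lt, hi⟩ := units_eq_pow_of_pow_eq_one hprim hy0n
  set y := y0 + (n - i) • x with hydef
  have hBxx : Bform q x x = 1 := by rw [bform_self hq, hx1, one_pow]
  have hqy : q y = 1 := by
    rw [hydef, q_add hq, q_nsmul hq, hx1, one_pow, mul_one, bform_nsmul_right hq,
      bform_comm q y0 x, ← hζdef, ← hi, ← pow_add, Nat.add_sub_cancel' (le_of_lt hi_lt)]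
    exact hprim.pow_eq_one
  have hBxy : Bform q x y = ζ := by
    rw [hydef, bform_add_right hq, bform_nsmul_right hq, hBxx, one_pow, mul_one]
  have hnx : n • x = 0 := by rw [hnn]; exact AddMonoid.exponent_nsmul_eq_zero x
  have hny : n • y = 0 := by rw [hnn]; exact AddMonoid.exponent_nsmul_eq_zero y
  set φ : ZMod n × ZMod n →+ A :=
    (liftHom n x hnx).comp (AddMonoidHom.fst _ _) +
      (liftHom n y hny).comp (AddMonoidHom.snd _ _) with hφdef
  have hφv : ∀ v : ZMod n × ZMod n, φ v = v.1.val • x + v.2.val • y := by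
    intro v
    rw [hφdef]
    simp only [AddMonoidHom.add_apply, AddMonoidHom.comp_apply, AddMonoidHom.coe_fst,
      AddMonoidHom.coe_snd, liftHom_apply]
  have hqφ : ∀ v : ZMod n × ZMod n, q (φ v) = ζ ^ (v.1.val * v.2.val) := by
    intro v
    rw [hφv, q_add hq, q_nsmul hq, q_nsmul hq, hx1, hqy, one_pow, one_pow, one_mul, one_mul,
      bform_nsmul_nsmul hq, hBxy]
  have hinj : Function.Injective φ := by
    rw [injective_iff_map_eq_zero]
    intro v hv
    have hB1 : Bform q (φ v) x = ζ ^ v.2.val := by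
      rw [hφv, hq.2, bform_nsmul_left hq, bform_nsmul_left hq, hBxx, one_pow, one_mul,
        bform_comm q y x, hBxy]
    have hByy : Bform q y y = 1 := by rw [bform_self hq, hqy, one_pow]
    have hB2 : Bform q (φ v) y = ζ ^ v.1.val := by
      rw [hφv, hq.2, bform_nsmul_left hq, bform_nsmul_left hq, hByy, one_pow, mul_one, hBxy]
    rw [hv, bform_zero_left hq] at hB1 hB2
    have h2 : v.2.val = 0 :=
      Nat.eq_zero_of_dvd_of_lt (hprim.dvd_of_pow_eq_one _ hB1.symm) (ZMod.val_lt _)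
    have h1 : v.1.val = 0 :=
      Nat.eq_zero_of_dvd_of_lt (hprim.dvd_of_pow_eq_one _ hB2.symm) (ZMod.val_lt _)
    exact Prod.ext ((ZMod.val_eq_zero _).mp h1) ((ZMod.val_eq_zero _).mp h2)
  exact ⟨ζ, hprim, φ, hinj, hqφ⟩

open MG in
theorem reverse_dir {A k : Type*} [AddCommGroup A] [Field k] {q : A → kˣ}
    [Finite A] (hq : IsQuadraticForm q) (n : ℕ) (hn : AddMonoid.exponent A = n)
    (hqn : ∀ x, q x ^ n = 1) {ζ : kˣ} (hζ : IsPrimitiveRoot ζ n)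
    (φ : ZMod n × ZMod n →+ A)
    (hφ : ∀ v : ZMod n × ZMod n, q (φ v) = ζ ^ (v.1.val * v.2.val)) :
    AddSubgroup.closure {x : A | q x = 1} = ⊤ := by
  rcases subsingleton_or_nontrivial A with hA | hA
  · apply (AddSubgroup.eq_top_iff' _).mpr
    intro x
    rw [Subsingleton.elim x 0]
    exact zero_mem _
  · haveI : NeZero n := ⟨by rw [← hn]; exact AddMonoid.exponent_ne_zero_of_finite⟩
    haveI : Fact (1 < n) := ⟨by rw [← hn]; exact AddMonoid.one_lt_exponent⟩
    set e1 := φ (1, 0) with he1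
    set e2 := φ (0, 1) with he2
    have hv0 : (0 : ZMod n).val = 0 := ZMod.val_zero
    have hv1 : (1 : ZMod n).val = 1 := ZMod.val_one n
    have hq1 : q e1 = 1 := by rw [he1, hφ]; simp [hv0]
    have hq2 : q e2 = 1 := by rw [he2, hφ]; simp [hv0]
    have hsum : e1 + e2 = φ (1, 1) := by
      rw [he1, he2, ← map_add, Prod.mk_add_mk, add_zero, zero_add]
    have hB12 : Bform q e1 e2 = ζ := by
      unfold Bform
      rw [hsum, hφ, hq1, hq2, hv1, mul_one, one_mul, inv_one, mul_one, pow_one]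
    have hB11 : Bform q e1 e1 = 1 := by rw [bform_self hq, hq1, one_pow]
    have hB22 : Bform q e2 e2 = 1 := by rw [bform_self hq, hq2, one_pow]
    have hne : ∀ g : A, n • g = 0 := fun g => by
      rw [← hn]; exact AddMonoid.exponent_nsmul_eq_zero g
    rw [AddSubgroup.eq_top_iff' (AddSubgroup.closure {x : A | q x = 1})]
    intro x
    have he1m : e1 ∈ AddSubgroup.closure {x : A | q x = 1} := AddSubgroup.subset_closure hq1
    have he2m : e2 ∈ AddSubgroup.closure {x : A | q x = 1} := AddSubgroup.subset_closure hq2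
    have hpow : ∀ g : A, Bform q x g ^ n = 1 := fun g => by
      rw [← bform_nsmul_right hq, hne, bform_zero_right hq]
    obtain ⟨b, hb_lt, hb⟩ := units_eq_pow_of_pow_eq_one hζ (hpow e1)
    obtain ⟨a, ha_lt, ha⟩ := units_eq_pow_of_pow_eq_one hζ (hpow e2)
    set h := a • e1 + b • e2 with hh
    have hBh1 : Bform q h e1 = ζ ^ b := by
      rw [hh, hq.2, bform_nsmul_left hq, bform_nsmul_left hq, hB11, one_pow, one_mul,
        bform_comm q e2 e1, hB12]
    have hBh2 : Bform q h e2 = ζ ^ a := by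
      rw [hh, hq.2, bform_nsmul_left hq, bform_nsmul_left hq, hB22, one_pow, mul_one, hB12]
    set w := x - h with hw
    have hw1 : Bform q w e1 = 1 := by
      rw [hw, sub_eq_add_neg, hq.2, bform_neg_left hq, hBh1, ← hb, mul_inv_cancel]
    have hw2 : Bform q w e2 = 1 := by
      rw [hw, sub_eq_add_neg, hq.2, bform_neg_left hq, hBh2, ← ha, mul_inv_cancel]
    obtain ⟨t, ht_lt, ht⟩ := units_eq_pow_of_pow_eq_one hζ (hqn w)
    set a' := (n - t) • e1 + e2 with ha'd
    have hqa' : q a' = ζ ^ (n - t) := by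
      rw [ha'd, q_add hq, q_nsmul hq, hq1, one_pow, hq2, one_mul, bform_nsmul_left hq,
        hB12, one_mul]
    have hBwa' : Bform q w a' = 1 := by
      rw [ha'd, bform_add_right hq, bform_nsmul_right hq, hw1, one_pow, hw2, one_mul]
    have hiso : q (w + a') = 1 := by
      rw [q_add hq, hqa', hBwa', mul_one, ← ht, ← pow_add,
        Nat.add_sub_cancel' (le_of_lt ht_lt)]
      exact hζ.pow_eq_one
    have hma' : a' ∈ AddSubgroup.closure {x : A | q x = 1} :=
      add_mem (AddSubgroup.nsmul_mem _ he1m _) he2m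
    have hmh : h ∈ AddSubgroup.closure {x : A | q x = 1} :=
      add_mem (AddSubgroup.nsmul_mem _ he1m _) (AddSubgroup.nsmul_mem _ he2m _)
    have hmwa : w + a' ∈ AddSubgroup.closure {x : A | q x = 1} :=
      AddSubgroup.subset_closure hiso
    have hx : x = ((w + a') - a') + h := by rw [add_sub_cancel_right, hw, sub_add_cancel]
    rw [hx]
    exact add_mem (sub_mem hmwa hma') hmh


open MG in
/-- A metric group `(A, q)` of exponent `n` is generated by its isotropic elements iff
`q^n = 1` and `(A, q)` contains a hyperbolic metric subgroup `(ℤ/n × ℤ/n, h)`. -/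
theorem stmt6 {k : Type*} [Field k] [CharZero k] [IsAlgClosed k]
    {A : Type*} [AddCommGroup A] [Finite A]
    (q : A → kˣ) (hq : IsQuadraticForm q) (hnd : Nondeg q)
    (n : ℕ) (hn : AddMonoid.exponent A = n) :
    AddSubgroup.closure {x : A | q x = 1} = ⊤ ↔
      ((∀ x, q x ^ n = 1) ∧
        ∃ ζ : kˣ, IsPrimitiveRoot ζ n ∧
          ∃ φ : ZMod n × ZMod n →+ A, Function.Injective φ ∧
            ∀ v : ZMod n × ZMod n, q (φ v) = ζ ^ (v.1.val * v.2.val)) := by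
  subst hn
  constructor
  · intro hgen
    exact ⟨qn_one hq hgen, forward_hyp hq hnd hgen⟩
  · rintro ⟨hqn, ζ, hζ, φ, hinj, hφ⟩
    exact reverse_dir hq _ rfl hqn hζ φ hφ
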